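/- If t⁰ is not a global minimizer of ψ, then there exists h ∈ (0,1] such that ψ(h t* + (1−h) t⁰) < ψ(t⁰). -/

import Mathlib

/-- Second-order Taylor expansion of `l` at `t0`, evaluated at `t`:
`l̃(t; t⁰) = l(t⁰) + ⟨∇l(t⁰), t − t⁰⟩ + (1/2)⟨t − t⁰, ∇²l(t⁰)(t − t⁰)⟩`. -/
noncomputable def taylor2 {n : ℕ} (l : (Fin n → ℝ) → ℝ) (t0 t : Fin n → ℝ) : ℝ :=
  l t0 + fderiv ℝ l t0 (t - t0)
    + (1 / 2) * fderiv ℝ (fun x => fderiv ℝ l x) t0 (t - t0) (t - t0)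


open Filter Set Topology

variable {E : Type*} [NormedAddCommGroup E] [NormedSpace ℝ E]

lemma lineMap_hasDerivAt (x d : E) (h0 : ℝ) :
    HasDerivAt (fun h : ℝ => x + h • d) d h0 := by
  simpa using (((hasDerivAt_id h0).smul_const d).const_add x)

/-- directional derivative along a line -/
lemma dirDeriv {l : E → ℝ} {x : E} (hx : DifferentiableAt ℝ l x) (d : E) :
    HasDerivAt (fun h : ℝ => l (x + h • d)) (fderiv ℝ l x d) 0 := by
  have hA := lineMap_hasDerivAt x d 0
  have hfd : HasFDerivAt l (fderiv ℝ l x) (x + (0:ℝ) • d) := by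
    simpa using hx.hasFDerivAt
  exact hfd.comp_hasDerivAt 0 hA

/-- slope limit: for convex `l`, gradient inequality. -/
lemma grad_ineq {l : E → ℝ} (hconv : ConvexOn ℝ Set.univ l)
    (hx : DifferentiableAt ℝ l x) (y : E) :
    l x + fderiv ℝ l x (y - x) ≤ l y := by
  set u := y - x with hu
  have hder := dirDeriv hx u
  have hT : Tendsto (fun h : ℝ => (l (x + h • u) - l x) / h) (𝓝[>] 0)
      (𝓝 (fderiv ℝ l x u)) := by
    have := hasDerivAt_iff_tendsto_slope.mp hder
    have h2 := this.mono_left (nhdsWithin_mono 0 (by intro a ha; exact ne_of_gt ha))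
    refine h2.congr' ?_
    filter_upwards [self_mem_nhdsWithin] with h hh
    simp [slope_def_field, div_eq_inv_mul]
  have hb : ∀ᶠ h in 𝓝[>] (0:ℝ), (l (x + h • u) - l x) / h ≤ l y - l x := by
    filter_upwards [Ioc_mem_nhdsGT one_pos] with h hh
    have hkey : l (x + h • u) ≤ (1 - h) * l x + h * l y := by
      have := hconv.2 (Set.mem_univ x) (Set.mem_univ y)
        (by linarith [hh.2] : (0:ℝ) ≤ 1 - h) (le_of_lt hh.1) (by ring)
      have he : (1 - h) • x + h • y = x + h • u := by
        rw [hu]; module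
      simpa [he] using this
    rw [div_le_iff₀ hh.1]
    nlinarith [hh.1]
  have := le_of_tendsto hT hb
  linarith

/-- second directional derivative of a convex C² function is nonneg -/
lemma second_nonneg {l : E → ℝ} (hl : ContDiff ℝ 2 l) (hconv : ConvexOn ℝ Set.univ l)
    (x d : E) : 0 ≤ fderiv ℝ (fun y => fderiv ℝ l y) x d d := by
  have hdl : Differentiable ℝ l := hl.differentiable two_ne_zero
  have hG : ContDiff ℝ 1 (fun y => fderiv ℝ l y) := hl.fderiv_right (by norm_num)
  have hGd : DifferentiableAt ℝ (fun y => fderiv ℝ l y) (x + (0:ℝ) • d) := by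
    simpa using (hG.differentiable one_ne_zero) x
  -- φ' h = fderiv l (x + h•d) d has derivative Q d d at 0
  have h1 : HasDerivAt (fun h : ℝ => fderiv ℝ l (x + h • d))
      (fderiv ℝ (fun y => fderiv ℝ l y) x d) 0 := by
    have := hGd.hasFDerivAt.comp_hasDerivAt 0 (lineMap_hasDerivAt x d 0)
    simpa [Function.comp_def] using this
  have h2 : HasDerivAt (fun h : ℝ => fderiv ℝ l (x + h • d) d)
      (fderiv ℝ (fun y => fderiv ℝ l y) x d d) 0 :=
    (ContinuousLinearMap.apply ℝ ℝ d).hasFDerivAt.comp_hasDerivAt 0 h1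
  have hT : Tendsto (fun h : ℝ => (fderiv ℝ l (x + h • d) d - fderiv ℝ l x d) / h)
      (𝓝[>] 0) (𝓝 (fderiv ℝ (fun y => fderiv ℝ l y) x d d)) := by
    have := hasDerivAt_iff_tendsto_slope.mp h2
    have h3 := this.mono_left (nhdsWithin_mono 0 (fun a ha => ne_of_gt ha))
    refine h3.congr' ?_
    filter_upwards [self_mem_nhdsWithin] with h hh
    simp [slope_def_field, div_eq_inv_mul]
  refine ge_of_tendsto hT ?_
  filter_upwards [self_mem_nhdsWithin] with h (hh : 0 < h)
  have hmono : fderiv ℝ l x d ≤ fderiv ℝ l (x + h • d) d := by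
    have g1 := grad_ineq hconv (hdl x) (x + h • d)
    have g2 := grad_ineq hconv (hdl (x + h • d)) x
    simp only [add_sub_cancel_left] at g1
    have hxs : x - (x + h • d) = -(h • d) := by module
    rw [hxs] at g2
    have e1 : fderiv ℝ l x (h • d) = h * fderiv ℝ l x d := by
      simp
    have e2 : fderiv ℝ l (x + h • d) (-(h • d)) = -(h * fderiv ℝ l (x + h • d) d) := by
      simp
    rw [e1] at g1; rw [e2] at g2
    nlinarith
  have : 0 ≤ fderiv ℝ l (x + h • d) d - fderiv ℝ l x d := by linarith
  positivity

lemma slope_tendsto {l : E → ℝ} {x : E} (hx : DifferentiableAt ℝ l x) (d : E) :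
    Tendsto (fun h : ℝ => (l (x + h • d) - l x) / h) (𝓝[>] 0)
      (𝓝 (fderiv ℝ l x d)) := by
  have := hasDerivAt_iff_tendsto_slope.mp (dirDeriv hx d)
  have h3 := this.mono_left (nhdsWithin_mono 0 (fun a ha => ne_of_gt ha))
  refine h3.congr' ?_
  filter_upwards [self_mem_nhdsWithin] with h hh
  simp [slope_def_field, div_eq_inv_mul]

set_option maxHeartbeats 1000000 in
/-- if `t⁰` is not a global minimizer of `ψ = l + P`, then there exists
`h ∈ (0, 1]` such that `ψ(h t* + (1 − h) t⁰) < ψ(t⁰)`, where `t*` is a global minimizer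
of the surrogate `ψ̃(·; t⁰) = l̃(·; t⁰) + P`. -/
theorem stmt1 {n : ℕ} (l P : (Fin n → ℝ) → ℝ)
    (hl_smooth : ContDiff ℝ 2 l) (hl_conv : ConvexOn ℝ Set.univ l)
    (hP_conv : ConvexOn ℝ Set.univ P)
    (t0 tstar : Fin n → ℝ)
    (ψ : (Fin n → ℝ) → ℝ) (hψ : ∀ t, ψ t = l t + P t)
    (ψt : (Fin n → ℝ) → ℝ) (hψt : ∀ t, ψt t = taylor2 l t0 t + P t)
    (htstar : ∀ t, ψt tstar ≤ ψt t)
    (hnotmin : ¬ ∀ t, ψ t0 ≤ ψ t) :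
    ∃ h ∈ Set.Ioc (0 : ℝ) 1, ψ (h • tstar + (1 - h) • t0) < ψ t0 := by
  push_neg at hnotmin
  obtain ⟨t1, ht1⟩ := hnotmin
  have hdl : Differentiable ℝ l := hl_smooth.differentiable two_ne_zero
  set L := fderiv ℝ l t0 with hLdef
  set Qm := fderiv ℝ (fun x => fderiv ℝ l x) t0 with hQdef
  set d := tstar - t0 with hd
  have htay : ∀ (u : Fin n → ℝ) (h : ℝ), taylor2 l t0 (t0 + h • u)
      = l t0 + h * L u + h ^ 2 * (1 / 2) * Qm u u := by
    intro u h
    have he : (t0 + h • u) - t0 = h • u := by module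
    rw [taylor2, he]
    simp
    ring
  have hPseg : ∀ (t : Fin n → ℝ) (h : ℝ), 0 < h → h ≤ 1 →
      P (t0 + h • (t - t0)) ≤ (1 - h) * P t0 + h * P t := by
    intro t h h0 h1
    have := hP_conv.2 (Set.mem_univ t0) (Set.mem_univ t)
      (by linarith : (0:ℝ) ≤ 1 - h) h0.le (by ring)
    have he : (1 - h) • t0 + h • t = t0 + h • (t - t0) := by module
    simpa [he] using this
  by_cases hc : L d + (P tstar - P t0) < 0
  · -- Case A: strict descent direction
    have hT : Tendsto (fun h : ℝ => (l (t0 + h • d) - l t0) / h + (P tstar - P t0))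
        (𝓝[>] 0) (𝓝 (L d + (P tstar - P t0))) :=
      (slope_tendsto (hdl t0) d).add_const _
    have hev := hT.eventually_lt_const hc
    obtain ⟨h, hh1, hh2⟩ := (hev.and ((Ioc_mem_nhdsGT one_pos : Set.Ioc (0:ℝ) 1 ∈ 𝓝[>] (0:ℝ)) : ∀ᶠ h in 𝓝[>] (0:ℝ), h ∈ Set.Ioc (0:ℝ) 1)).exists
    refine ⟨h, hh2, ?_⟩
    have h0 : 0 < h := hh2.1
    have hpt : h • tstar + (1 - h) • t0 = t0 + h • d := by rw [hd]; module
    rw [hpt, hψ, hψ]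
    have hP := hPseg tstar h h0 hh2.2
    have hl' : l (t0 + h • d) - l t0 + h * (P tstar - P t0) < 0 := by
      have := (div_lt_iff₀ h0).mp (by linarith : (l (t0 + h • d) - l t0) / h < -(P tstar - P t0))
      nlinarith
    have hdeq : tstar - t0 = d := hd.symm
    rw [hdeq] at hP
    nlinarith
  · -- Case B: t0 minimizes the surrogate, hence minimizes ψ — contradiction
    exfalso
    push_neg at hc
    have hQdd : 0 ≤ Qm d d := second_nonneg hl_smooth hl_conv t0 d
    have htstar_eq : t0 + (1:ℝ) • d = tstar := by rw [hd]; module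
    have hmin0 : ∀ t, ψt t0 ≤ ψt t := by
      intro t
      have h1 : ψt tstar ≤ ψt t0 := htstar t0
      have h2 : ψt t0 ≤ ψt tstar := by
        rw [hψt, hψt]
        have e1 : taylor2 l t0 tstar = l t0 + L d + (1/2) * Qm d d := by
          rw [← htstar_eq, htay]; ring
        have e0 : taylor2 l t0 t0 = l t0 := by
          have := htay d 0
          simpa using this
        rw [e0, e1]
        nlinarith
      linarith [htstar t]
    -- now show ψ t0 ≤ ψ t1
    set u := t1 - t0 with hu
    have hQuu : 0 ≤ Qm u u := second_nonneg hl_smooth hl_conv t0 u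
    have ha : 0 ≤ L u + (P t1 - P t0) := by
      have hT : Tendsto (fun h : ℝ => (L u + (P t1 - P t0)) + h * ((1/2) * Qm u u))
          (𝓝[>] 0) (𝓝 (L u + (P t1 - P t0))) := by
        have hlin : Tendsto (fun h : ℝ => h * ((1/2) * Qm u u)) (𝓝 (0:ℝ)) (𝓝 0) := by
          simpa [Pi.mul_def] using (continuous_id.mul continuous_const).tendsto (0:ℝ)
        have := (tendsto_const_nhds : Tendsto (fun _ : ℝ => L u + (P t1 - P t0)) (𝓝 (0:ℝ)) _).add hlin
        simpa using this.mono_left nhdsWithin_le_nhds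
      refine ge_of_tendsto hT ?_
      filter_upwards [Ioc_mem_nhdsGT one_pos] with h hh
      have hmin := hmin0 (t0 + h • u)
      rw [hψt, hψt, htay] at hmin
      have e0 : taylor2 l t0 t0 = l t0 := by simpa using htay u 0
      rw [e0] at hmin
      have hP := hPseg t1 h hh.1 hh.2
      rw [← hu] at hP
      nlinarith [hh.1, sq_nonneg h]
    have hg := grad_ineq hl_conv (hdl t0) t1
    rw [hψ, hψ] at ht1
    rw [← hu] at hg
    nlinarith
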